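/- Let F be a real reduced multifield, χ(F)={σ∈{−1,1}^{F∖{0}} : σ(ab)=σ(a)σ(b)}, X={x∈χ(F) : x(−1)=−1 and a,b∈ker(x) ⟹ (a+b)∖{0}⊆ker(x)} (where ker(x)={f : x(f)=1}), and G={σ∈{−1,1}^X : there exists f∈F∖{0} with σ(x)=x(f) for all x∈X}. Then the map A:X→Sper(F) sending x to the morphism x':F→Q₂ with x'(f)=x(f) for f≠0 and x'(0)=0 is a bijection, and the map B:G→F∖{0} sending σ to the unique f with σ(x)=x(f) for all x∈X is a bijection. -/
import Mathlib


universe u v w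

/-- The data of a multiring: a multivalued addition, a (single-valued) multiplication,
a negation map and constants `0`, `1`. -/
structure MultiringData (R : Type u) where
  add : R → R → Set R
  mul : R → R → R
  neg : R → R
  zero : R
  one : R

/-- `(R,+,·,−,0,1)` is a multiring: `(R,+,−,0)` is a commutative multigroup,
`(R,·,1)` is a commutative monoid, `a·0 = 0`, and `c ∈ a+b → cd ∈ ad+bd`. -/
structure IsMultiring {R : Type u} (A : MultiringData R) : Prop where
  add_nonempty : ∀ a b, (A.add a b).Nonempty
  add_comm' : ∀ a b, A.add a b = A.add b a
  add_rev : ∀ {a b d}, d ∈ A.add a b → a ∈ A.add d (A.neg b) ∧ b ∈ A.add (A.neg a) d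
  zero_add' : ∀ {x y}, y ∈ A.add A.zero x ↔ x = y
  add_assoc' : ∀ a b c, (⋃ t ∈ A.add a b, A.add t c) = ⋃ s ∈ A.add b c, A.add a s
  mul_comm' : ∀ a b, A.mul a b = A.mul b a
  mul_assoc' : ∀ a b c, A.mul (A.mul a b) c = A.mul a (A.mul b c)
  one_mul' : ∀ a, A.mul A.one a = a
  mul_zero' : ∀ a, A.mul a A.zero = A.zero
  distrib : ∀ (d : R) {a b c : R}, c ∈ A.add a b → A.mul c d ∈ A.add (A.mul a d) (A.mul b d)

/-- A multifield is a multiring in which every nonzero element has a multiplicative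
inverse (and `1 ≠ 0`). -/
structure IsMultifield {R : Type u} (A : MultiringData R) extends IsMultiring A : Prop where
  one_ne_zero' : A.one ≠ A.zero
  inv : ∀ a, a ≠ A.zero → ∃ b, A.mul a b = A.one

/-- A real reduced multifield: a multifield with `a³ = a` and `a ∈ 1+1 → a = 1`. -/
def IsRealReducedMultifield {R : Type u} (A : MultiringData R) : Prop :=
  IsMultifield A ∧ (∀ a, A.mul (A.mul a a) a = a) ∧ ∀ a, a ∈ A.add A.one A.one → a = A.one

/-- A real reduced multiring: `1 ≠ 0`, `a³ = a`, `c ∈ a + ab² → c = a`, and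
`c, d ∈ a² + b² → c = d`. -/
def IsRealReducedMultiring {R : Type u} (A : MultiringData R) : Prop :=
  IsMultiring A ∧ A.one ≠ A.zero ∧ (∀ a, A.mul (A.mul a a) a = a) ∧
    (∀ a b c, c ∈ A.add a (A.mul a (A.mul b b)) → c = a) ∧
    (∀ a b c d, c ∈ A.add (A.mul a a) (A.mul b b) → d ∈ A.add (A.mul a a) (A.mul b b) → c = d)

/-- Morphisms of multirings. -/
structure IsMultiringHom {R : Type u} {S : Type v} (A : MultiringData R) (B : MultiringData S)
    (f : R → S) : Prop where
  map_add : ∀ {a b c}, c ∈ A.add a b → f c ∈ B.add (f a) (f b)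
  map_neg : ∀ a, f (A.neg a) = B.neg (f a)
  map_zero : f A.zero = B.zero
  map_mul : ∀ a b, f (A.mul a b) = B.mul (f a) (f b)
  map_one : f A.one = B.one

/-- Isomorphisms of multirings: bijective morphisms whose inverse is again a morphism. -/
def IsMultiringIso {R : Type u} {S : Type v} (A : MultiringData R) (B : MultiringData S)
    (f : R → S) : Prop :=
  IsMultiringHom A B f ∧ Function.Bijective f ∧
    ∀ a b c, f c ∈ B.add (f a) (f b) → c ∈ A.add a b
/-- The multivalued sum of the multifield `Q₂ = {−1,0,1}`. -/
def q2add : SignType → SignType → Set SignType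
  | SignType.zero, x => {x}
  | x, SignType.zero => {x}
  | SignType.pos, SignType.pos => {SignType.pos}
  | SignType.neg, SignType.neg => {SignType.neg}
  | _, _ => Set.univ

/-- The multifield `Q₂ = {−1,0,1}` with the usual product and multivalued sum
`0+x={x}`, `1+1={1}`, `(−1)+(−1)={−1}`, `1+(−1)={−1,0,1}`. -/
def Q2 : MultiringData SignType where
  add := q2add
  mul := (· * ·)
  neg := (- ·)
  zero := 0
  one := 1
/-- The set of orderings of a multiring/multifield `A`, identified with the multiring
morphisms `A → Q₂`. -/
def SperSet {R : Type u} (A : MultiringData R) : Set (R → SignType) :=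
  {σ | IsMultiringHom A Q2 σ}

/-- Conversion `{−1,1} → {−1,0,1}`. -/
def unitToSign (u : ℤˣ) : SignType := if u = 1 then 1 else -1

/-- `ker(σ) = {f ≠ 0 : σ(f) = 1}`. -/
def kerSet {R : Type u} (A : MultiringData R) (σ : R → ℤˣ) : Set R :=
  {f | f ≠ A.zero ∧ σ f = 1}

/-- The character group `χ(F)`: functions `σ : F∖{0} → {−1,1}` with `σ(ab) = σ(a)σ(b)`
(normalised by `σ(0) = 1` on the irrelevant value `0`). -/
def chiSet {R : Type u} (A : MultiringData R) : Set (R → ℤˣ) :=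
  {σ | σ A.zero = 1 ∧ ∀ a b, a ≠ A.zero → b ≠ A.zero → σ (A.mul a b) = σ a * σ b}

/-- `X = {x ∈ χ(F) : x(−1) = −1 and a,b ∈ ker(x) ⟹ (a+b)∖{0} ⊆ ker(x)}`. -/
def XSet {R : Type u} (A : MultiringData R) : Set (R → ℤˣ) :=
  {σ | σ ∈ chiSet A ∧ σ (A.neg A.one) = -1 ∧
    ∀ a b, a ∈ kerSet A σ → b ∈ kerSet A σ →
      ∀ c ∈ A.add a b, c ≠ A.zero → c ∈ kerSet A σ}

/-- `G = {σ ∈ {−1,1}^X : ∃ f ∈ F∖{0}, σ(x) = x(f) for all x ∈ X}`. -/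
def GSet {R : Type u} (A : MultiringData R) : Set ({σ : R → ℤˣ // σ ∈ XSet A} → ℤˣ) :=
  {τ | ∃ f, f ≠ A.zero ∧ ∀ x : {σ : R → ℤˣ // σ ∈ XSet A}, τ x = x.1 f}

open Classical in
/-- The map `A : X → Sper(F)`, sending `x` to `x' : F → Q₂` with `x'(f) = x(f)` for `f ≠ 0`
and `x'(0) = 0`. -/
noncomputable def AmapX {R : Type u} (A : MultiringData R) (σ : R → ℤˣ) : R → SignType :=
  fun f => if f = A.zero then 0 else unitToSign (σ f)

section Aux

variable {R : Type u} {A : MultiringData R}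

namespace MRAux

lemma self_mem_zero_add (hR : IsMultiring A) (x : R) : x ∈ A.add A.zero x :=
  hR.zero_add'.mpr rfl

lemma zero_mem_add_neg (hR : IsMultiring A) (a : R) : A.zero ∈ A.add a (A.neg a) :=
  (hR.add_rev (self_mem_zero_add hR a)).1

lemma eq_neg_of_zero_mem (hR : IsMultiring A) {a b : R} (h : A.zero ∈ A.add a b) :
    b = A.neg a := by
  have h2 := (hR.add_rev h).2
  exact (hR.zero_add'.mp (by rwa [hR.add_comm'] at h2)).symm

lemma neg_zero (hR : IsMultiring A) : A.neg A.zero = A.zero :=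
  (eq_neg_of_zero_mem hR (self_mem_zero_add hR A.zero)).symm

lemma neg_neg (hR : IsMultiring A) (a : R) : A.neg (A.neg a) = a := by
  have h := zero_mem_add_neg hR a
  rw [hR.add_comm'] at h
  exact (eq_neg_of_zero_mem hR h).symm

lemma neg_eq_zero_iff (hR : IsMultiring A) {a : R} : A.neg a = A.zero ↔ a = A.zero := by
  constructor
  · intro h; rw [← neg_neg hR a, h, neg_zero hR]
  · rintro rfl; exact neg_zero hR

lemma mul_one' (hR : IsMultiring A) (a : R) : A.mul a A.one = a := by
  rw [hR.mul_comm', hR.one_mul']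

lemma zero_mul' (hR : IsMultiring A) (a : R) : A.mul A.zero a = A.zero := by
  rw [hR.mul_comm', hR.mul_zero']

lemma neg_one_mul (hR : IsMultiring A) (a : R) : A.mul (A.neg A.one) a = A.neg a := by
  have h := hR.distrib a (zero_mem_add_neg hR A.one)
  rw [zero_mul' hR, hR.mul_comm' A.one a, mul_one' hR,
    hR.mul_comm' (A.neg A.one) a] at h
  rw [hR.mul_comm']
  exact eq_neg_of_zero_mem hR h

lemma mul_neg_one (hR : IsMultiring A) (a : R) : A.mul a (A.neg A.one) = A.neg a := by
  rw [hR.mul_comm', neg_one_mul hR]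

lemma mul_swap (hR : IsMultiring A) (x y z : R) :
    A.mul (A.mul x y) z = A.mul (A.mul x z) y := by
  rw [hR.mul_assoc', hR.mul_comm' y z, hR.mul_assoc']

lemma mul_mul_mul_comm' (hR : IsMultiring A) (x y z w : R) :
    A.mul (A.mul x y) (A.mul z w) = A.mul (A.mul x z) (A.mul y w) := by
  rw [hR.mul_assoc', hR.mul_assoc', ← hR.mul_assoc' y z w, hR.mul_comm' y z,
    hR.mul_assoc' z y w]

lemma neg_mul_neg (hR : IsMultiring A) (a b : R) :
    A.mul (A.neg a) (A.neg b) = A.mul a b := by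
  rw [← neg_one_mul hR a, ← neg_one_mul hR b, mul_mul_mul_comm' hR, mul_neg_one hR,
    neg_neg hR, hR.one_mul']

lemma mul_neg (hR : IsMultiring A) (a b : R) :
    A.mul a (A.neg b) = A.neg (A.mul a b) := by
  rw [← neg_one_mul hR b, ← hR.mul_assoc', hR.mul_comm' a (A.neg A.one), hR.mul_assoc',
    neg_one_mul hR]

/-- One direction of associativity for the multivalued sum, element form. -/
lemma assoc_mem (hR : IsMultiring A) {a b c t d : R} (hd : d ∈ A.add t c)
    (ht : t ∈ A.add a b) : ∃ s ∈ A.add b c, d ∈ A.add a s := by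
  have key := hR.add_assoc' a b c
  have hmem : d ∈ ⋃ t' ∈ A.add a b, A.add t' c :=
    Set.mem_biUnion ht hd
  rw [key] at hmem
  simpa using hmem

lemma assoc_mem' (hR : IsMultiring A) {a b c s d : R} (hd : d ∈ A.add a s)
    (hs : s ∈ A.add b c) : ∃ t ∈ A.add a b, d ∈ A.add t c := by
  have key := hR.add_assoc' a b c
  have hmem : d ∈ ⋃ s' ∈ A.add b c, A.add a s' :=
    Set.mem_biUnion hs hd
  rw [← key] at hmem
  simpa using hmem

section RR

variable (hA : IsRealReducedMultifield A)
include hA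

lemma hR : IsMultiring A := hA.1.toIsMultiring

lemma one_ne_zero : A.one ≠ A.zero := hA.1.one_ne_zero'

lemma sq_one {a : R} (ha : a ≠ A.zero) : A.mul a a = A.one := by
  obtain ⟨b, hb⟩ := hA.1.inv a ha
  have h3 := hA.2.1 a
  calc A.mul a a = A.mul (A.mul a a) (A.mul a b) := by rw [hb, mul_one' (hR hA)]
    _ = A.mul (A.mul (A.mul a a) a) b := ((hR hA).mul_assoc' _ _ _).symm
    _ = A.mul a b := by rw [h3]
    _ = A.one := hb

lemma mul_ne_zero {a b : R} (ha : a ≠ A.zero) (hb : b ≠ A.zero) :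
    A.mul a b ≠ A.zero := by
  intro h
  apply ha
  calc a = A.mul a (A.mul b b) := by rw [sq_one hA hb, mul_one' (hR hA)]
    _ = A.mul (A.mul a b) b := ((hR hA).mul_assoc' _ _ _).symm
    _ = A.zero := by rw [h, zero_mul' (hR hA)]

lemma neg_one_ne_zero : A.neg A.one ≠ A.zero := by
  intro h
  exact one_ne_zero hA ((neg_eq_zero_iff (hR hA)).mp h)

lemma one_add_one {c : R} (hc : c ∈ A.add A.one A.one) : c = A.one := hA.2.2 c hc

lemma neg_one_ne_one : A.neg A.one ≠ A.one := by
  intro h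
  have h0 : A.zero ∈ A.add A.one A.one := by
    have := zero_mem_add_neg (hR hA) A.one
    rwa [h] at this
  exact one_ne_zero hA (one_add_one hA h0).symm

/-- Scaling a sum by a nonzero element (whose square is 1). -/
lemma add_smul_mem {x y b e : R} (hb : b ≠ A.zero)
    (he : e ∈ A.add (A.mul x b) (A.mul y b)) : ∃ z ∈ A.add x y, e = A.mul z b := by
  have h1 := (hR hA).distrib b he
  rw [(hR hA).mul_assoc' x b b, (hR hA).mul_assoc' y b b, sq_one hA hb,
    mul_one' (hR hA), mul_one' (hR hA)] at h1
  refine ⟨A.mul e b, h1, ?_⟩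
  rw [(hR hA).mul_assoc', sq_one hA hb, mul_one' (hR hA)]

end RR

end MRAux

end Aux

section Preord

variable {R : Type u} {A : MultiringData R}

namespace MRAux

/-- A preordering of the multifield: contains 1, excludes 0 and −1, closed under
products and (nonzero parts of) sums. -/
def IsPreord (A : MultiringData R) (T : Set R) : Prop :=
  A.one ∈ T ∧ A.zero ∉ T ∧ A.neg A.one ∉ T ∧
    (∀ a ∈ T, ∀ b ∈ T, A.mul a b ∈ T) ∧
    (∀ a ∈ T, ∀ b ∈ T, ∀ c ∈ A.add a b, c ≠ A.zero → c ∈ T)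

/-- Extension of a preordering `T` by an element `b`. -/
def Text (A : MultiringData R) (T : Set R) (b : R) : Set R :=
  {c | c ≠ A.zero ∧ ∃ t s, (t ∈ T ∨ t = A.zero) ∧ (s ∈ T ∨ s = A.zero) ∧
    c ∈ A.add t (A.mul s b)}

/-- Four-term reassociation for sums of the shape `(t + sb) + (t' + s'b)`. -/
lemma assoc4 (hR : IsMultiring A) {t u t' u' c c' e : R}
    (hc : c ∈ A.add t u) (hc' : c' ∈ A.add t' u') (he : e ∈ A.add c c') :
    ∃ m n, m ∈ A.add t t' ∧ n ∈ A.add u u' ∧ e ∈ A.add m n := by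
  obtain ⟨q, hq, heq⟩ := assoc_mem hR he hc
  rw [hR.add_comm'] at hq
  obtain ⟨y, hy, hqy⟩ := assoc_mem hR hq hc'
  obtain ⟨m, hm, hem⟩ := assoc_mem' hR heq hqy
  rw [hR.add_comm'] at hy
  exact ⟨m, y, hm, hy, hem⟩

variable (hA : IsRealReducedMultifield A)
include hA

lemma t0_mul {T : Set R} (hT : IsPreord A T) {t s : R}
    (ht : t ∈ T ∨ t = A.zero) (hs : s ∈ T ∨ s = A.zero) :
    A.mul t s ∈ T ∨ A.mul t s = A.zero := by
  rcases ht with ht | rfl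
  · rcases hs with hs | rfl
    · exact Or.inl (hT.2.2.2.1 t ht s hs)
    · exact Or.inr ((hR hA).mul_zero' t)
  · exact Or.inr (zero_mul' (hR hA) s)

lemma t0_add {T : Set R} (hT : IsPreord A T) {t s c : R}
    (ht : t ∈ T ∨ t = A.zero) (hs : s ∈ T ∨ s = A.zero) (hc : c ∈ A.add t s) :
    c ∈ T ∨ c = A.zero := by
  rcases ht with ht | rfl
  · rcases hs with hs | rfl
    · by_cases h0 : c = A.zero
      · exact Or.inr h0
      · exact Or.inl (hT.2.2.2.2 t ht s hs c hc h0)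
    · rw [(hR hA).add_comm'] at hc
      have := ((hR hA).zero_add'.mp hc).symm
      rw [this]; exact Or.inl ht
  · exact ((hR hA).zero_add'.mp hc) ▸ hs

lemma text_subset {T : Set R} (hT : IsPreord A T) (b : R) : T ⊆ Text A T b := by
  intro c hc
  have hc0 : c ≠ A.zero := fun h => hT.2.1 (h ▸ hc)
  refine ⟨hc0, c, A.zero, Or.inl hc, Or.inr rfl, ?_⟩
  rw [zero_mul' (hR hA), (hR hA).add_comm']
  exact self_mem_zero_add (hR hA) c

lemma mem_text_self {T : Set R} (hT : IsPreord A T) (b : R) (hb : b ≠ A.zero) :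
    b ∈ Text A T b := by
  refine ⟨hb, A.zero, A.one, Or.inr rfl, Or.inl hT.1, ?_⟩
  rw [(hR hA).one_mul']
  exact self_mem_zero_add (hR hA) b

lemma text_mul {T : Set R} (hT : IsPreord A T) {b : R} (hb : b ≠ A.zero)
    {c c' : R} (hc : c ∈ Text A T b) (hc' : c' ∈ Text A T b) :
    A.mul c c' ∈ Text A T b := by
  obtain ⟨hc0, t, s, ht, hs, hmem⟩ := hc
  obtain ⟨hc0', t', s', ht', hs', hmem'⟩ := hc'
  have hR' := hR hA
  -- e := c * c' lies in (t c') + ((s b) c')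
  have h1 : A.mul c c' ∈ A.add (A.mul t c') (A.mul (A.mul s b) c') := by
    exact hR'.distrib c' hmem
  -- p := t * c'
  have hp : A.mul t c' ∈ A.add (A.mul t t') (A.mul (A.mul s' t) b) := by
    have := hR'.distrib t hmem'
    rwa [hR'.mul_comm' c' t, hR'.mul_comm' t' t, mul_swap hR' s' b t] at this
  -- q := (s b) * c'
  have hq : A.mul (A.mul s b) c' ∈ A.add (A.mul s' s) (A.mul (A.mul s t') b) := by
    have h2 := hR'.distrib (A.mul s b) hmem'
    rw [hR'.mul_comm' c' (A.mul s b)] at h2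
    rw [hR'.mul_comm' t' (A.mul s b), hR'.mul_assoc' s b t', hR'.mul_comm' b t',
      ← hR'.mul_assoc' s t' b] at h2
    rw [mul_mul_mul_comm' hR' s' b s b, sq_one hA hb, mul_one' hR'] at h2
    rw [hR'.add_comm'] at h2
    exact h2
  obtain ⟨m, n, hm, hn, hemn⟩ := assoc4 hR' hp hq h1
  obtain ⟨w, hw, rfl⟩ := add_smul_mem hA hb hn
  refine ⟨mul_ne_zero hA hc0 hc0', m, w, ?_, ?_, hemn⟩
  · exact t0_add hA hT (t0_mul hA hT ht ht') (t0_mul hA hT hs' hs) hm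
  · exact t0_add hA hT (t0_mul hA hT hs' ht) (t0_mul hA hT hs ht') hw

lemma text_add {T : Set R} (hT : IsPreord A T) {b : R} (hb : b ≠ A.zero)
    {c c' e : R} (hc : c ∈ Text A T b) (hc' : c' ∈ Text A T b)
    (he : e ∈ A.add c c') (he0 : e ≠ A.zero) : e ∈ Text A T b := by
  obtain ⟨hc0, t, s, ht, hs, hmem⟩ := hc
  obtain ⟨hc0', t', s', ht', hs', hmem'⟩ := hc'
  obtain ⟨m, n, hm, hn, hemn⟩ := assoc4 (hR hA) hmem hmem' he
  obtain ⟨w, hw, rfl⟩ := add_smul_mem hA hb hn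
  exact ⟨he0, m, w, t0_add hA hT ht ht' hm, t0_add hA hT hs hs' hw, hemn⟩

lemma text_neg_one_notMem {T : Set R} (hT : IsPreord A T) {b : R} (hb0 : b ≠ A.zero)
    (hb : b ∉ T) (hnb : A.neg b ∉ T) : A.neg A.one ∉ Text A T b := by
  have hR' := hR hA
  rintro ⟨-, t, s, ht, hs, hmem⟩
  rcases hs with hs | rfl
  · have hs0 : s ≠ A.zero := fun h => hT.2.1 (h ▸ hs)
    rcases ht with ht | rfl
    · -- both nonzero : derive neg (s b) ∈ T, then neg b ∈ T
      have h2 := (hR'.add_rev hmem).2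
      have h3 := hR'.distrib (A.neg A.one) h2
      rw [mul_neg_one hR' (A.mul s b), neg_mul_neg hR' t A.one, mul_one' hR' t,
        neg_mul_neg hR' A.one A.one, hR'.one_mul' A.one] at h3
      have hsb0 : A.mul s b ≠ A.zero := mul_ne_zero hA hs0 hb0
      have hnsb0 : A.neg (A.mul s b) ≠ A.zero := fun h =>
        hsb0 ((neg_eq_zero_iff hR').mp h)
      have hmemT : A.neg (A.mul s b) ∈ T := hT.2.2.2.2 _ ht _ hT.1 _ h3 hnsb0
      apply hnb
      have : A.neg b = A.mul s (A.neg (A.mul s b)) := by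
        rw [mul_neg hR', ← hR'.mul_assoc', sq_one hA hs0, hR'.one_mul']
      rw [this]
      exact hT.2.2.2.1 _ hs _ hmemT
    · -- t = 0 : neg 1 = s b
      have h4 := hR'.zero_add'.mp hmem
      apply hnb
      have hb' : b = A.neg s := by
        calc b = A.mul s (A.mul s b) := by
              rw [← hR'.mul_assoc', sq_one hA hs0, hR'.one_mul']
          _ = A.mul s (A.neg A.one) := by rw [h4]
          _ = A.neg s := mul_neg_one hR' s
      rw [hb', neg_neg hR']
      exact hs
  · -- s = 0 : neg 1 = t
    rw [zero_mul' hR' b] at hmem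
    rw [hR'.add_comm'] at hmem
    have h4 := hR'.zero_add'.mp hmem
    rcases ht with ht | rfl
    · exact hT.2.2.1 (h4 ▸ ht)
    · exact neg_one_ne_zero hA h4.symm

lemma text_isPreord {T : Set R} (hT : IsPreord A T) {b : R} (hb0 : b ≠ A.zero)
    (hb : b ∉ T) (hnb : A.neg b ∉ T) : IsPreord A (Text A T b) :=
  ⟨text_subset hA hT b hT.1, fun h => h.1 rfl,
    text_neg_one_notMem hA hT hb0 hb hnb,
    fun _ hc _ hc' => text_mul hA hT hb0 hc hc',
    fun _ hc _ hc' c he he0 => text_add hA hT hb0 hc hc' he he0⟩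

/-- Every preordering is contained in a maximal one. -/
lemma exists_maximal_preord {T : Set R} (hT : IsPreord A T) :
    ∃ M, T ⊆ M ∧ IsPreord A M ∧ ∀ T', IsPreord A T' → M ⊆ T' → T' ⊆ M := by
  have key : ∀ c ⊆ {T | IsPreord A T}, IsChain (· ⊆ ·) c → c.Nonempty →
      ∃ ub ∈ {T | IsPreord A T}, ∀ s ∈ c, s ⊆ ub := by
    intro c hcS hchain hcne
    obtain ⟨T₂, hT₂⟩ := hcne
    refine ⟨⋃₀ c, ⟨⟨T₂, hT₂, (hcS hT₂).1⟩, ?_, ?_, ?_, ?_⟩, fun s hs => Set.subset_sUnion_of_mem hs⟩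
    · rintro ⟨T₃, h₃, h0⟩
      exact (hcS h₃).2.1 h0
    · rintro ⟨T₃, h₃, h0⟩
      exact (hcS h₃).2.2.1 h0
    · rintro a ⟨Ta, hTa, ha⟩ b ⟨Tb, hTb, hb⟩
      rcases hchain.total hTa hTb with h | h
      · exact ⟨Tb, hTb, (hcS hTb).2.2.2.1 a (h ha) b hb⟩
      · exact ⟨Ta, hTa, (hcS hTa).2.2.2.1 a ha b (h hb)⟩
    · rintro a ⟨Ta, hTa, ha⟩ b ⟨Tb, hTb, hb⟩ e he he0
      rcases hchain.total hTa hTb with h | h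
      · exact ⟨Tb, hTb, (hcS hTb).2.2.2.2 a (h ha) b hb e he he0⟩
      · exact ⟨Ta, hTa, (hcS hTa).2.2.2.2 a ha b (h hb) e he he0⟩
  obtain ⟨M, hTM, hM⟩ := zorn_subset_nonempty {T | IsPreord A T} key T hT
  exact ⟨M, hTM, hM.1, fun T' hT' hMT' => hM.2 hT' hMT'⟩

lemma maximal_total {M : Set R} (hM : IsPreord A M)
    (hmax : ∀ T', IsPreord A T' → M ⊆ T' → T' ⊆ M) {f : R} (hf : f ≠ A.zero) :
    f ∈ M ∨ A.neg f ∈ M := by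
  by_contra hcon
  push_neg at hcon
  have hP := text_isPreord hA hM hf hcon.1 hcon.2
  exact hcon.1 (hmax _ hP (text_subset hA hM f) (mem_text_self hA hM f hf))

end MRAux

end Preord

section Sep

variable {R : Type u} {A : MultiringData R}

namespace MRAux

open Classical in
/-- The character of `F∖{0}` associated to an ordering `M`. -/
noncomputable def ordChar (A : MultiringData R) (M : Set R) : R → ℤˣ :=
  fun f => if f = A.zero ∨ f ∈ M then 1 else -1

variable (hA : IsRealReducedMultifield A)
include hA

lemma ordChar_eq_one {M : Set R} (hM0 : A.zero ∉ M) {f : R} (hf : f ≠ A.zero) :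
    ordChar A M f = 1 ↔ f ∈ M := by
  unfold ordChar
  constructor
  · intro h
    by_contra hfM
    rw [if_neg (by tauto)] at h
    exact (by decide : ¬((-1 : ℤˣ) = 1)) h
  · intro h
    rw [if_pos (Or.inr h)]

lemma ordChar_eq_neg_one {M : Set R} (hM0 : A.zero ∉ M) {f : R} (hf : f ≠ A.zero)
    (hfM : f ∉ M) : ordChar A M f = -1 := by
  unfold ordChar
  rw [if_neg (by tauto)]

lemma notMem_of_mem_mul {M : Set R} (hM : IsPreord A M) {a b : R} (ha : a ≠ A.zero)
    (haM : a ∈ M) (hbM : b ∉ M) : A.mul a b ∉ M := by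
  intro h
  apply hbM
  have : b = A.mul a (A.mul a b) := by
    rw [← (hR hA).mul_assoc', sq_one hA ha, (hR hA).one_mul']
  rw [this]
  exact hM.2.2.2.1 a haM _ h

lemma ordChar_mem_XSet {M : Set R} (hM : IsPreord A M)
    (htot : ∀ f, f ≠ A.zero → f ∈ M ∨ A.neg f ∈ M) : ordChar A M ∈ XSet A := by
  have hR' := hR hA
  have h0M : A.zero ∉ M := hM.2.1
  refine ⟨⟨if_pos (Or.inl rfl), ?_⟩, ?_, ?_⟩
  · -- multiplicativity
    intro a b ha hb
    have hab : A.mul a b ≠ A.zero := mul_ne_zero hA ha hb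
    rcases htot a ha with haM | haM
    · rcases htot b hb with hbM | hbM
      · rw [(ordChar_eq_one hA h0M ha).mpr haM, (ordChar_eq_one hA h0M hb).mpr hbM,
          (ordChar_eq_one hA h0M hab).mpr (hM.2.2.2.1 a haM b hbM), one_mul]
      · have hbM' : b ∉ M := fun h => by
          have := hM.2.2.2.1 b h _ hbM
          rw [mul_neg hR', sq_one hA hb] at this
          exact hM.2.2.1 this
        rw [(ordChar_eq_one hA h0M ha).mpr haM, ordChar_eq_neg_one hA h0M hb hbM',
          ordChar_eq_neg_one hA h0M hab (notMem_of_mem_mul hA hM ha haM hbM'), one_mul]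
    · have haM' : a ∉ M := fun h => by
        have := hM.2.2.2.1 a h _ haM
        rw [mul_neg hR', sq_one hA ha] at this
        exact hM.2.2.1 this
      rcases htot b hb with hbM | hbM
      · have habM : A.mul a b ∉ M := by
          rw [hR'.mul_comm']
          exact notMem_of_mem_mul hA hM hb hbM haM'
        rw [ordChar_eq_neg_one hA h0M ha haM', (ordChar_eq_one hA h0M hb).mpr hbM,
          ordChar_eq_neg_one hA h0M hab habM, mul_one]
      · have hbM' : b ∉ M := fun h => by
          have := hM.2.2.2.1 b h _ hbM
          rw [mul_neg hR', sq_one hA hb] at this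
          exact hM.2.2.1 this
        have habM : A.mul a b ∈ M := by
          have := hM.2.2.2.1 _ haM _ hbM
          rwa [neg_mul_neg hR'] at this
        rw [ordChar_eq_neg_one hA h0M ha haM', ordChar_eq_neg_one hA h0M hb hbM',
          (ordChar_eq_one hA h0M hab).mpr habM]
        decide
  · -- value at −1
    exact ordChar_eq_neg_one hA h0M (neg_one_ne_zero hA) hM.2.2.1
  · -- kernel closed under addition
    rintro a b ⟨ha0, ha1⟩ ⟨hb0, hb1⟩ c hc hc0
    have haM := (ordChar_eq_one hA h0M ha0).mp ha1
    have hbM := (ordChar_eq_one hA h0M hb0).mp hb1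
    exact ⟨hc0, (ordChar_eq_one hA h0M hc0).mpr (hM.2.2.2.2 a haM b hbM c hc hc0)⟩

lemma singleton_one_isPreord : IsPreord A {A.one} := by
  refine ⟨rfl, fun h => one_ne_zero hA (Set.mem_singleton_iff.mp h).symm,
    fun h => neg_one_ne_one hA (Set.mem_singleton_iff.mp h), ?_, ?_⟩
  · rintro a rfl b rfl
    simp only [Set.mem_singleton_iff]
    exact mul_one' (hR hA) A.one
  · rintro a rfl b rfl c hc _
    exact one_add_one hA hc

/-- Separation: any nonzero `h ≠ 1` is negative at some `x ∈ X`. -/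
lemma exists_x_neg {h : R} (h0 : h ≠ A.zero) (h1 : h ≠ A.one) :
    ∃ x ∈ XSet A, x h = -1 := by
  have hR' := hR hA
  by_cases hneg : h = A.neg A.one
  · obtain ⟨M, -, hM, hmax⟩ := exists_maximal_preord hA (singleton_one_isPreord hA)
    refine ⟨ordChar A M, ordChar_mem_XSet hA hM (fun f hf => maximal_total hA hM hmax hf), ?_⟩
    rw [hneg]
    exact ordChar_eq_neg_one hA hM.2.1 (neg_one_ne_zero hA) hM.2.2.1
  · have hnh0 : A.neg h ≠ A.zero := fun hh => h0 ((neg_eq_zero_iff hR').mp hh)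
    have hnh1 : A.neg h ∉ ({A.one} : Set R) := by
      intro hh
      exact hneg (by rw [← neg_neg hR' h, Set.mem_singleton_iff.mp hh])
    have hh1 : A.neg (A.neg h) ∉ ({A.one} : Set R) := by
      rw [neg_neg hR' h]
      exact fun hh => h1 (Set.mem_singleton_iff.mp hh)
    have hpre := text_isPreord hA (singleton_one_isPreord hA) hnh0 hnh1 hh1
    obtain ⟨M, hTM, hM, hmax⟩ := exists_maximal_preord hA hpre
    have hnhM : A.neg h ∈ M :=
      hTM (mem_text_self hA (singleton_one_isPreord hA) (A.neg h) hnh0)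
    have hhM : h ∉ M := by
      intro hh
      have := hM.2.2.2.1 h hh _ hnhM
      rw [mul_neg hR', sq_one hA h0] at this
      exact hM.2.2.1 this
    exact ⟨ordChar A M, ordChar_mem_XSet hA hM (fun f hf => maximal_total hA hM hmax hf),
      ordChar_eq_neg_one hA hM.2.1 h0 hhM⟩

/-- Elements of `F∖{0}` are separated by `X`. -/
lemma sep_inj {f g : R} (hf : f ≠ A.zero) (hg : g ≠ A.zero)
    (h : ∀ x ∈ XSet A, x f = x g) : f = g := by
  have hR' := hR hA
  by_contra hne
  have hfg : A.mul f g ≠ A.zero := mul_ne_zero hA hf hg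
  have h1 : A.mul f g ≠ A.one := by
    intro he
    apply hne
    calc f = A.mul (A.mul f g) g := by
          rw [hR'.mul_assoc', sq_one hA hg, mul_one' hR']
      _ = g := by rw [he, hR'.one_mul']
  obtain ⟨x, hx, hxneg⟩ := exists_x_neg hA hfg h1
  have hmul := hx.1.2 f g hf hg
  rw [h x hx, Int.units_mul_self, hxneg] at hmul
  exact (by decide : ¬((-1 : ℤˣ) = 1)) hmul

end MRAux

end Sep

section Main

namespace MRAux

lemma unitToSign_one : unitToSign 1 = 1 := by simp [unitToSign]

lemma unitToSign_neg_one : unitToSign (-1) = -1 := by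
  simp only [unitToSign, if_neg (by decide : ¬((-1 : ℤˣ) = 1))]

lemma unitToSign_mul (u v : ℤˣ) :
    unitToSign (u * v) = unitToSign u * unitToSign v := by
  rcases Int.units_eq_one_or u with rfl | rfl <;>
    rcases Int.units_eq_one_or v with rfl | rfl <;>
      simp [unitToSign] <;> decide

lemma unitToSign_neg (u : ℤˣ) : unitToSign (-u) = -unitToSign u := by
  rcases Int.units_eq_one_or u with rfl | rfl <;> simp [unitToSign] <;> decide

lemma unitToSign_inj {u v : ℤˣ} (h : unitToSign u = unitToSign v) : u = v := by
  rcases Int.units_eq_one_or u with rfl | rfl <;>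
    rcases Int.units_eq_one_or v with rfl | rfl <;>
      first | rfl | (exfalso; revert h; decide)

lemma q2add_zero_left (s : SignType) : q2add SignType.zero s = {s} := by
  cases s <;> rfl

lemma q2add_zero_right (s : SignType) : q2add s SignType.zero = {s} := by
  cases s <;> rfl

lemma Q2_add_eq : Q2.add = q2add := rfl
lemma Q2_zero_eq : Q2.zero = 0 := rfl
lemma Q2_one_eq : Q2.one = 1 := rfl
lemma Q2_mul_eq : Q2.mul = (· * ·) := rfl
lemma Q2_neg_eq : Q2.neg = (- ·) := rfl

variable {R : Type u} {A : MultiringData R}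

lemma amapx_zero (A : MultiringData R) (x : R → ℤˣ) : AmapX A x A.zero = 0 :=
  if_pos rfl

lemma amapx_ne (A : MultiringData R) (x : R → ℤˣ) {f : R} (h : f ≠ A.zero) :
    AmapX A x f = unitToSign (x f) :=
  if_neg h

lemma x_one_eq_one (hA : IsRealReducedMultifield A) {x : R → ℤˣ} (hx : x ∈ XSet A) :
    x A.one = 1 := by
  have h := hx.1.2 A.one A.one (one_ne_zero hA) (one_ne_zero hA)
  rw [mul_one' (hR hA)] at h
  rcases Int.units_eq_one_or (x A.one) with h1 | h1
  · exact h1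
  · rw [h1] at h; exact absurd h (by decide)

lemma x_neg (hA : IsRealReducedMultifield A) {x : R → ℤˣ} (hx : x ∈ XSet A) {a : R}
    (ha : a ≠ A.zero) : x (A.neg a) = -(x a) := by
  rw [← neg_one_mul (hR hA) a, hx.1.2 _ a (neg_one_ne_zero hA) ha, hx.2.1]
  simp

lemma amapx_hom (hA : IsRealReducedMultifield A) {x : R → ℤˣ} (hx : x ∈ XSet A) :
    IsMultiringHom A Q2 (AmapX A x) := by
  have hR' := hR hA
  constructor
  · -- map_add
    intro a b c hc
    rw [Q2_add_eq]
    by_cases ha : a = A.zero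
    · subst ha
      have hbc : b = c := hR'.zero_add'.mp hc
      subst hbc
      rw [amapx_zero, show (0 : SignType) = SignType.zero from rfl, q2add_zero_left]
      rfl
    · by_cases hb : b = A.zero
      · subst hb
        rw [hR'.add_comm'] at hc
        have hac : a = c := hR'.zero_add'.mp hc
        subst hac
        rw [amapx_zero, show (0 : SignType) = SignType.zero from rfl, q2add_zero_right]
        rfl
      · by_cases hc0 : c = A.zero
        · subst hc0
          have hba : b = A.neg a := eq_neg_of_zero_mem hR' hc
          subst hba
          have hna : A.neg a ≠ A.zero := fun h => ha ((neg_eq_zero_iff hR').mp h)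
          rw [amapx_zero, amapx_ne A x ha, amapx_ne A x hna, x_neg hA hx ha,
            unitToSign_neg]
          rcases Int.units_eq_one_or (x a) with h1 | h1 <;> rw [h1]
          · rw [unitToSign_one]
            exact Set.mem_univ _
          · rw [unitToSign_neg_one]
            exact Set.mem_univ _
        · -- a, b, c all nonzero
          rw [amapx_ne A x ha, amapx_ne A x hb, amapx_ne A x hc0]
          rcases Int.units_eq_one_or (x a) with h1 | h1 <;>
            rcases Int.units_eq_one_or (x b) with h2 | h2
          · have hcK := hx.2.2 a b ⟨ha, h1⟩ ⟨hb, h2⟩ c hc hc0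
            rw [h1, h2, hcK.2, unitToSign_one]
            exact rfl
          · rw [h1, h2, unitToSign_one, unitToSign_neg_one]
            exact Set.mem_univ _
          · rw [h1, h2, unitToSign_one, unitToSign_neg_one]
            exact Set.mem_univ _
          · have hna : A.neg a ≠ A.zero := fun h => ha ((neg_eq_zero_iff hR').mp h)
            have hnb : A.neg b ≠ A.zero := fun h => hb ((neg_eq_zero_iff hR').mp h)
            have hnc : A.neg c ≠ A.zero := fun h => hc0 ((neg_eq_zero_iff hR').mp h)
            have hka : x (A.neg a) = 1 := by rw [x_neg hA hx ha, h1]; decide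
            have hkb : x (A.neg b) = 1 := by rw [x_neg hA hx hb, h2]; decide
            have hmem : A.neg c ∈ A.add (A.neg a) (A.neg b) := by
              have := hR'.distrib (A.neg A.one) hc
              rwa [mul_neg_one hR' a, mul_neg_one hR' b, mul_neg_one hR' c] at this
            have hcK := hx.2.2 (A.neg a) (A.neg b) ⟨hna, hka⟩ ⟨hnb, hkb⟩
              (A.neg c) hmem hnc
            have hxc : x c = -1 := by
              have h5 := hcK.2
              rw [x_neg hA hx hc0] at h5
              rcases Int.units_eq_one_or (x c) with h3 | h3
              · rw [h3] at h5; exact absurd h5 (by decide)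
              · exact h3
            rw [h1, h2, hxc, unitToSign_neg_one]
            exact rfl
  · -- map_neg
    intro a
    rw [Q2_neg_eq]
    by_cases ha : a = A.zero
    · subst ha
      rw [neg_zero hR', amapx_zero]
      decide
    · have hna : A.neg a ≠ A.zero := fun h => ha ((neg_eq_zero_iff hR').mp h)
      rw [amapx_ne A x ha, amapx_ne A x hna, x_neg hA hx ha, unitToSign_neg]
  · rw [Q2_zero_eq]; exact amapx_zero A x
  · -- map_mul
    intro a b
    rw [Q2_mul_eq]
    by_cases ha : a = A.zero
    · subst ha
      rw [zero_mul' hR', amapx_zero]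
      simp
    · by_cases hb : b = A.zero
      · subst hb
        rw [hR'.mul_zero', amapx_zero]
        simp
      · have hab : A.mul a b ≠ A.zero := mul_ne_zero hA ha hb
        rw [amapx_ne A x ha, amapx_ne A x hb, amapx_ne A x hab,
          hx.1.2 a b ha hb, unitToSign_mul]
  · -- map_one
    rw [Q2_one_eq, amapx_ne A x (one_ne_zero hA), x_one_eq_one hA hx, unitToSign_one]

end MRAux

end Main

section Final

namespace MRAux

variable {R : Type u} {A : MultiringData R}

lemma amapx_injOn (hA : IsRealReducedMultifield A) {x y : R → ℤˣ} (hx : x ∈ XSet A)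
    (hy : y ∈ XSet A) (h : AmapX A x = AmapX A y) : x = y := by
  funext f
  by_cases hf : f = A.zero
  · subst hf
    rw [hx.1.1, hy.1.1]
  · have hcf := congrFun h f
    rw [amapx_ne A x hf, amapx_ne A y hf] at hcf
    exact unitToSign_inj hcf

noncomputable def sperChar (σ : R → SignType) : R → ℤˣ :=
  fun f => if σ f = SignType.neg then -1 else 1

lemma sper_surj (hA : IsRealReducedMultifield A) {σ : R → SignType}
    (hσ : σ ∈ SperSet A) : ∃ x ∈ XSet A, AmapX A x = σ := by
  have hz : σ A.zero = 0 := hσ.map_zero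
  have ho : σ A.one = 1 := hσ.map_one
  have hnz : ∀ f, f ≠ A.zero → σ f ≠ 0 := by
    intro f hf h0
    obtain ⟨g, hg⟩ := hA.1.inv f hf
    have hm := hσ.map_mul f g
    rw [hg, ho, Q2_mul_eq, h0] at hm
    simp at hm
  refine ⟨sperChar σ, ⟨⟨?_, ?_⟩, ?_, ?_⟩, ?_⟩
  · simp only [sperChar]
    rw [hz]
    decide
  · intro a b ha hb
    simp only [sperChar]
    have hm := hσ.map_mul a b
    rw [Q2_mul_eq] at hm
    rcases h1 : σ a with _ | _ | _
    · exact absurd h1 (hnz a ha)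
    all_goals rcases h2 : σ b with _ | _ | _
    all_goals try exact absurd h2 (hnz b hb)
    all_goals rw [hm, h1, h2] <;> decide
  · have hn := hσ.map_neg A.one
    rw [Q2_neg_eq, ho] at hn
    simp only [sperChar]
    rw [hn]
    decide
  · rintro a b ⟨ha0, ha1⟩ ⟨hb0, hb1⟩ c hc hc0
    simp only [sperChar] at ha1 hb1 ⊢
    have hsa : σ a = SignType.pos := by
      rcases h1 : σ a with _ | _ | _
      · exact absurd h1 (hnz a ha0)
      · rw [h1, if_pos rfl] at ha1
        exact absurd ha1 (by decide)
      · rfl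
    have hsb : σ b = SignType.pos := by
      rcases h2 : σ b with _ | _ | _
      · exact absurd h2 (hnz b hb0)
      · rw [h2, if_pos rfl] at hb1
        exact absurd hb1 (by decide)
      · rfl
    have hadd := hσ.map_add hc
    rw [Q2_add_eq, hsa, hsb] at hadd
    have hsc : σ c = SignType.pos := hadd
    refine ⟨hc0, ?_⟩
    simp only [sperChar]
    rw [hsc]
    decide
  · funext f
    by_cases hf : f = A.zero
    · subst hf
      rw [amapx_zero, hz]
    · rw [amapx_ne A _ hf]
      simp only [sperChar]
      rcases h1 : σ f with _ | _ | _
      · exact absurd h1 (hnz f hf)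
      · rw [if_pos rfl, unitToSign_neg_one]
        decide
      · rw [if_neg (by decide), unitToSign_one]
        rfl

end MRAux

end Final
/-- For a real reduced multifield `F`: the map `A : X → Sper(F)`, `x ↦ x'`, is a bijection,
and each `σ ∈ G` arises from a unique `f ∈ F∖{0}` via `σ(x) = x(f)`, the assignment
`f ↦ σ_f` being a bijection `F∖{0} → G` (whose inverse is the map `B : G → F∖{0}`). -/
theorem spec_bijections_of_real_reduced_multifield {R : Type u} (A : MultiringData R)
    (hA : IsRealReducedMultifield A) :
    Set.BijOn (AmapX A) (XSet A) (SperSet A) ∧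
    (∀ τ ∈ GSet A, ∃! f : R, f ≠ A.zero ∧ ∀ x : {σ : R → ℤˣ // σ ∈ XSet A}, τ x = x.1 f) ∧
    Set.BijOn (fun (f : R) => fun (x : {σ : R → ℤˣ // σ ∈ XSet A}) => x.1 f)
      {f : R | f ≠ A.zero} (GSet A) := by
  refine ⟨⟨fun x hx => MRAux.amapx_hom hA hx,
      fun x hx y hy h => MRAux.amapx_injOn hA hx hy h,
      fun σ hσ => ?_⟩, ?_, ?_, ?_, ?_⟩
  · obtain ⟨x, hx, hxe⟩ := MRAux.sper_surj hA hσ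
    exact ⟨x, hx, hxe⟩
  · intro τ hτ
    obtain ⟨f, hf0, hf⟩ := hτ
    refine ⟨f, ⟨hf0, hf⟩, ?_⟩
    rintro g ⟨hg0, hg⟩
    exact MRAux.sep_inj hA hg0 hf0 (fun x hx => (hg ⟨x, hx⟩).symm.trans (hf ⟨x, hx⟩))
  · exact fun f hf => ⟨f, hf, fun x => rfl⟩
  · intro f hf g hg h
    exact MRAux.sep_inj hA hf hg (fun x hx => congrFun h ⟨x, hx⟩)
  · intro τ hτ
    obtain ⟨f, hf0, hf⟩ := hτ
    exact ⟨f, hf0, funext fun x => (hf x).symm⟩
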